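/- On the 6-cycle (hexagon) with antipodal vertices a and b, the permutation swapping the pebbles at a and b and fixing the other four vertices satisfies rt(C_6, (a b)) = 3; moreover, in any 3-step routing, either all intermediate positions of both pebbles lie on the left a–b path, or all lie on the right a–b path. -/

import Mathlib

/-- A single routing step on `G`: an involutive permutation that swaps the pebbles
on the endpoints of each edge of a matching of `G`. -/
def IsMatchingStep {V : Type*} (G : SimpleGraph V) (σ : Equiv.Perm V) : Prop :=
  (∀ v, σ (σ v) = v) ∧ ∀ v, σ v ≠ v → G.Adj v (σ v)

/-- The permutation `π` (giving the destination of each pebble) can be routed on `G`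
in `k` matching steps. -/
def RoutableIn {V : Type*} (G : SimpleGraph V) (π : Equiv.Perm V) (k : ℕ) : Prop :=
  ∃ L : List (Equiv.Perm V), L.length = k ∧ (∀ σ ∈ L, IsMatchingStep G σ) ∧
    L.reverse.prod = π

/-- The routing time `rt(G, π)`: the minimum number of matching steps needed to
route `π` on `G`. -/
noncomputable def routingTime {V : Type*} (G : SimpleGraph V) (π : Equiv.Perm V) : ℕ :=
  sInf {k | RoutableIn G π k}

/-- The routing number `rt(G)`: the maximum of `rt(G, π)` over all permutations `π`. -/
noncomputable def routingNumber {V : Type*} (G : SimpleGraph V) : ℕ :=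
  sSup (Set.range fun π : Equiv.Perm V => routingTime G π)


set_option maxRecDepth 100000
set_option maxHeartbeats 2000000

def hexM : List (Fin 6 → Fin 6) :=
  [![0,1,2,3,4,5], ![1,0,2,3,4,5], ![0,2,1,3,4,5], ![0,1,3,2,4,5], ![0,1,2,4,3,5],
   ![0,1,2,3,5,4], ![5,1,2,3,4,0], ![1,0,3,2,4,5], ![1,0,2,4,3,5], ![1,0,2,3,5,4],
   ![0,2,1,4,3,5], ![0,2,1,3,5,4], ![5,2,1,3,4,0], ![0,1,3,2,5,4], ![5,1,3,2,4,0],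
   ![5,1,2,4,3,0], ![1,0,3,2,5,4], ![5,2,1,4,3,0]]

def swapF : Fin 6 → Fin 6 := ![3,1,2,0,4,5]

def expandF (g : Fin 6 → Fin 3) : Fin 6 → Fin 6 := fun v => ![v - 1, v, v + 1] (g v)

theorem expand_mem : ∀ g : Fin 6 → Fin 3,
    (∀ v, expandF g (expandF g v) = v) → expandF g ∈ hexM := by decide

theorem key1 : hexM.Forall (fun f => ¬ (∀ v, f v = swapF v)) := by decide

theorem key2 : hexM.Forall (fun f => hexM.Forall (fun g =>
    ¬ (∀ v, g (f v) = swapF v))) := by decide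

theorem key3 : hexM.Forall (fun f => hexM.Forall (fun g => hexM.Forall (fun h =>
    (∀ v, h (g (f v)) = swapF v) →
    ((f 0 ∈ ([0,1,2,3] : List (Fin 6)) ∧ g (f 0) ∈ ([0,1,2,3] : List (Fin 6)) ∧
      f 3 ∈ ([0,1,2,3] : List (Fin 6)) ∧ g (f 3) ∈ ([0,1,2,3] : List (Fin 6))) ∨
     (f 0 ∈ ([0,5,4,3] : List (Fin 6)) ∧ g (f 0) ∈ ([0,5,4,3] : List (Fin 6)) ∧
      f 3 ∈ ([0,5,4,3] : List (Fin 6)) ∧ g (f 3) ∈ ([0,5,4,3] : List (Fin 6))))))) := by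
  decide

theorem neighbor_of_adj {v w : Fin 6} (h : (SimpleGraph.cycleGraph 6).Adj v w) :
    w = v - 1 ∨ w = v + 1 := by
  rw [SimpleGraph.cycleGraph_adj'] at h
  rcases h with h | h
  · left
    have h' : v - w = 1 := Fin.ext (by simpa using h)
    have := sub_eq_iff_eq_add.mp h'
    rw [this]; abel
  · right
    have h' : w - v = 1 := Fin.ext (by simpa using h)
    have := sub_eq_iff_eq_add.mp h'
    rw [this]; abel

theorem classify (σ : Equiv.Perm (Fin 6))
    (h : IsMatchingStep (SimpleGraph.cycleGraph 6) σ) : (⇑σ : Fin 6 → Fin 6) ∈ hexM := by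
  obtain ⟨hinv, hadj⟩ := h
  have hnb : ∀ v, σ v = v - 1 ∨ σ v = v ∨ σ v = v + 1 := by
    intro v
    by_cases hf : σ v = v
    · exact Or.inr (Or.inl hf)
    · rcases neighbor_of_adj (hadj v hf) with h1 | h1
      · exact Or.inl h1
      · exact Or.inr (Or.inr h1)
  set g : Fin 6 → Fin 3 := fun v =>
    if σ v = v - 1 then 0 else if σ v = v then 1 else 2 with hg
  have hfe : (⇑σ : Fin 6 → Fin 6) = expandF g := by
    funext v
    simp only [expandF, hg]
    split_ifs with h1 h2
    · simpa using h1
    · simpa using h2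
    · rcases hnb v with h' | h' | h'
      · exact absurd h' h1
      · exact absurd h' h2
      · simpa using h'
  rw [hfe]
  exact expand_mem g (by intro v; rw [← hfe]; exact hinv v)

theorem swap_eq_swapF : ∀ v : Fin 6, Equiv.swap (0 : Fin 6) 3 v = swapF v := by decide

/-- On the hexagon `C_6` with antipodal vertices `0` and `3`, swapping the pebbles at
`0` and `3` takes exactly 3 matching steps; moreover, in any 3-step routing, the
intermediate positions of both pebbles all lie on the left `0–3` path `{0,1,2,3}`
or all lie on the right `0–3` path `{0,5,4,3}`. -/
theorem routingTime_hexagon_swap_antipodal :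
    routingTime (SimpleGraph.cycleGraph 6) (Equiv.swap (0 : Fin 6) 3) = 3 ∧
    ∀ σ1 σ2 σ3 : Equiv.Perm (Fin 6),
      IsMatchingStep (SimpleGraph.cycleGraph 6) σ1 →
      IsMatchingStep (SimpleGraph.cycleGraph 6) σ2 →
      IsMatchingStep (SimpleGraph.cycleGraph 6) σ3 →
      σ3 * σ2 * σ1 = Equiv.swap (0 : Fin 6) 3 →
      (({σ1 0, σ2 (σ1 0), σ1 3, σ2 (σ1 3)} : Set (Fin 6)) ⊆ {0, 1, 2, 3} ∨
       ({σ1 0, σ2 (σ1 0), σ1 3, σ2 (σ1 3)} : Set (Fin 6)) ⊆ {0, 5, 4, 3}) := by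
  have main : ∀ σ1 σ2 σ3 : Equiv.Perm (Fin 6),
      IsMatchingStep (SimpleGraph.cycleGraph 6) σ1 →
      IsMatchingStep (SimpleGraph.cycleGraph 6) σ2 →
      IsMatchingStep (SimpleGraph.cycleGraph 6) σ3 →
      σ3 * σ2 * σ1 = Equiv.swap (0 : Fin 6) 3 →
      (({σ1 0, σ2 (σ1 0), σ1 3, σ2 (σ1 3)} : Set (Fin 6)) ⊆ {0, 1, 2, 3} ∨
       ({σ1 0, σ2 (σ1 0), σ1 3, σ2 (σ1 3)} : Set (Fin 6)) ⊆ {0, 5, 4, 3}) := by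
    intro σ1 σ2 σ3 h1 h2 h3 hEq
    have m1 := classify σ1 h1
    have m2 := classify σ2 h2
    have m3 := classify σ3 h3
    have hpt : ∀ v, σ3 (σ2 (σ1 v)) = swapF v := by
      intro v
      rw [← swap_eq_swapF, ← hEq]
      rfl
    have := ((List.forall_iff_forall_mem.mp
      ((List.forall_iff_forall_mem.mp
        ((List.forall_iff_forall_mem.mp key3) _ m1)) _ m2)) _ m3) hpt
    rcases this with ⟨a1, a2, a3, a4⟩ | ⟨a1, a2, a3, a4⟩
    · left
      simp only [List.mem_cons, List.not_mem_nil, or_false] at a1 a2 a3 a4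
      intro x hx
      simp only [Set.mem_insert_iff, Set.mem_singleton_iff] at hx ⊢
      rcases hx with rfl | rfl | rfl | rfl <;> tauto
    · right
      simp only [List.mem_cons, List.not_mem_nil, or_false] at a1 a2 a3 a4
      intro x hx
      simp only [Set.mem_insert_iff, Set.mem_singleton_iff] at hx ⊢
      rcases hx with rfl | rfl | rfl | rfl <;> tauto
  refine ⟨?_, main⟩
  have h3mem : RoutableIn (SimpleGraph.cycleGraph 6) (Equiv.swap (0 : Fin 6) 3) 3 := by
    refine ⟨[Equiv.swap 0 1 * Equiv.swap 2 3, Equiv.swap 1 2,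
             Equiv.swap 0 1 * Equiv.swap 2 3], rfl, ?_, ?_⟩
    · intro σ hσ
      simp only [List.mem_cons, List.not_mem_nil, or_false] at hσ
      rcases hσ with rfl | rfl | rfl
      · exact ⟨by decide, by decide⟩
      · exact ⟨by decide, by decide⟩
      · exact ⟨by decide, by decide⟩
    · ext v
      fin_cases v <;> rfl
  apply le_antisymm
  · exact Nat.sInf_le h3mem
  · have hne : ({k | RoutableIn (SimpleGraph.cycleGraph 6) (Equiv.swap (0 : Fin 6) 3) k} : Set ℕ).Nonempty := ⟨3, h3mem⟩
    apply le_csInf hne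
    intro k hk
    by_contra hlt
    push_neg at hlt
    interval_cases k
    · obtain ⟨L, hlen, -, hprod⟩ := hk
      rw [List.length_eq_zero_iff.mp hlen] at hprod
      simp at hprod
      have := congrArg (fun e : Equiv.Perm (Fin 6) => e 0) hprod
      simp [Equiv.swap_apply_left] at this
    · obtain ⟨L, hlen, hsteps, hprod⟩ := hk
      obtain ⟨σ, rfl⟩ := List.length_eq_one_iff.mp hlen
      simp at hprod
      have m1 := classify σ (hsteps σ (by simp))
      refine (List.forall_iff_forall_mem.mp key1) _ m1 (fun v => ?_)
      rw [← swap_eq_swapF, ← hprod]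
    · obtain ⟨L, hlen, hsteps, hprod⟩ := hk
      obtain ⟨σ1, σ2, rfl⟩ := List.length_eq_two.mp hlen
      have hprod' : σ2 * σ1 = Equiv.swap (0 : Fin 6) 3 := by simpa using hprod
      have m1 := classify σ1 (hsteps σ1 (by simp))
      have m2 := classify σ2 (hsteps σ2 (by simp))
      refine ((List.forall_iff_forall_mem.mp
        ((List.forall_iff_forall_mem.mp key2) _ m1)) _ m2) (fun v => ?_)
      rw [← swap_eq_swapF, ← hprod']
      rfl
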